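/- Let P be a 2-dimensional complete unimodular (smooth projective) fan in R^2 with rays ρ_1, …, ρ_n in cyclic order and primitive generators w_1, …, w_n, and define integers τ_i by -τ_i w_i = w_{i-1} + w_{i+1} (indices mod n). Then 12 = 3n + Σ_{i=1}^{n} τ_i. -/

import Mathlib

open scoped BigOperators

/-- The determinant of two integer vectors in the plane. -/
def det2 (a b : ℤ × ℤ) : ℤ := a.1 * b.2 - a.2 * b.1

/-- An integer vector regarded as a real vector. -/
def toR (v : ℤ × ℤ) : ℝ × ℝ := ((v.1 : ℝ), (v.2 : ℝ))

/-- The closed 2-dimensional cone of a complete fan in `ℝ²` spanned by the `i`-th and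
`(i+1)`-st rays. -/
def maxCone {n : ℕ} (w : ZMod n → ℤ × ℤ) (i : ZMod n) : Set (ℝ × ℝ) :=
  {x | ∃ a b : ℝ, 0 ≤ a ∧ 0 ≤ b ∧ x = a • toR (w i) + b • toR (w (i + 1))}

/-- The open (relative interior of the) 2-dimensional cone spanned by the `i`-th and
`(i+1)`-st rays. -/
def maxConeInt {n : ℕ} (w : ZMod n → ℤ × ℤ) (i : ZMod n) : Set (ℝ × ℝ) :=
  {x | ∃ a b : ℝ, 0 < a ∧ 0 < b ∧ x = a • toR (w i) + b • toR (w (i + 1))}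

namespace Noether
lemma det2_skew (a b : ℤ × ℤ) : det2 a b = - det2 b a := by simp [det2]; ring
lemma det2_self (a : ℤ × ℤ) : det2 a a = 0 := by simp [det2]; ring
lemma det2_smul_right (a : ℤ × ℤ) (c : ℤ) (b : ℤ × ℤ) : det2 a (c • b) = c * det2 a b := by
  simp [det2, Prod.smul_fst, Prod.smul_snd, smul_eq_mul]; ring
lemma det2_smul_left (a : ℤ × ℤ) (c : ℤ) (b : ℤ × ℤ) : det2 (c • a) b = c * det2 a b := by
  simp [det2, Prod.smul_fst, Prod.smul_snd, smul_eq_mul]; ring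
lemma det2_add_right (a b c : ℤ × ℤ) : det2 a (b + c) = det2 a b + det2 a c := by
  simp [det2, Prod.fst_add, Prod.snd_add]; ring
lemma det2_add_left (a b c : ℤ × ℤ) : det2 (a + b) c = det2 a c + det2 b c := by
  simp [det2, Prod.fst_add, Prod.snd_add]; ring
lemma det2_neg_left (a b : ℤ × ℤ) : det2 (-a) b = - det2 a b := by simp [det2]; ring
lemma det2_neg_right (a b : ℤ × ℤ) : det2 a (-b) = - det2 a b := by simp [det2]; ring
lemma det2_zero_left (b : ℤ × ℤ) : det2 0 b = 0 := by simp [det2]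
lemma cramer {u v : ℤ × ℤ} (h : det2 u v = 1) (z : ℤ × ℤ) :
    z = det2 z v • u + det2 u z • v := by
  have h' : u.1 * v.2 - u.2 * v.1 = 1 := h
  apply Prod.ext
  · show z.1 = ((z.1*v.2 - z.2*v.1) • u + (u.1*z.2 - u.2*z.1) • v).1
    simp only [Prod.fst_add, Prod.smul_fst, smul_eq_mul]
    linear_combination (-z.1) * h'
  · show z.2 = ((z.1*v.2 - z.2*v.1) • u + (u.1*z.2 - u.2*z.1) • v).2
    simp only [Prod.snd_add, Prod.smul_snd, smul_eq_mul]
    linear_combination (-z.2) * h'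

lemma smul_of_det0 {u z : ℤ × ℤ} (hu : ∃ v, det2 u v = 1) (h0 : det2 u z = 0) :
    ∃ c : ℤ, z = c • u := by
  obtain ⟨v, hv⟩ := hu
  refine ⟨det2 z v, ?_⟩
  have hv' : u.1 * v.2 - u.2 * v.1 = 1 := hv
  have h0' : u.1 * z.2 - u.2 * z.1 = 0 := h0
  apply Prod.ext
  · show z.1 = ((z.1*v.2 - z.2*v.1) • u).1
    simp only [Prod.smul_fst, smul_eq_mul]
    linear_combination (-z.1) * hv' + v.1 * h0'
  · show z.2 = ((z.1*v.2 - z.2*v.1) • u).2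
    simp only [Prod.smul_snd, smul_eq_mul]
    linear_combination (-z.2) * hv' + v.2 * h0'

lemma coords_of_toR {u v z : ℤ × ℤ} {a b : ℝ} (h1 : det2 u v = 1)
    (he : toR z = a • toR u + b • toR v) :
    a = (det2 z v : ℝ) ∧ b = (det2 u z : ℝ) := by
  have e1 : (z.1 : ℝ) = a * u.1 + b * v.1 := by
    have := congrArg Prod.fst he
    simpa [toR, Prod.fst_add, Prod.smul_fst, smul_eq_mul] using this
  have e2 : (z.2 : ℝ) = a * u.2 + b * v.2 := by
    have := congrArg Prod.snd he
    simpa [toR, Prod.snd_add, Prod.smul_snd, smul_eq_mul] using this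
  have h1' : (u.1 : ℝ) * v.2 - u.2 * v.1 = 1 := by exact_mod_cast congrArg (Int.cast : ℤ → ℝ) h1
  constructor
  · have hc : (det2 z v : ℝ) = z.1*v.2 - z.2*v.1 := by push_cast [det2]; ring
    rw [hc]
    linear_combination (-(v.2:ℝ)) * e1 + (v.1:ℝ) * e2 + (-a) * h1'
  · have hc : (det2 u z : ℝ) = u.1*z.2 - u.2*z.1 := by push_cast [det2]; ring
    rw [hc]
    linear_combination (u.2:ℝ) * e1 + (-(u.1:ℝ)) * e2 + (-b) * h1'

lemma toR_comb (c d : ℤ) (x y : ℤ × ℤ) :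
    toR (c • x + d • y) = (c : ℝ) • toR x + (d : ℝ) • toR y := by
  apply Prod.ext <;>
    simp [toR, Prod.fst_add, Prod.snd_add, Prod.smul_fst, Prod.smul_snd, smul_eq_mul]

/-- membership of the real image of an integer vector in the open cone -/
lemma mem_int {n : ℕ} {w : ZMod n → ℤ × ℤ} {l : ZMod n} {z : ℤ × ℤ}
    (hdet : det2 (w l) (w (l + 1)) = 1)
    (ha : 0 < det2 z (w (l + 1))) (hb : 0 < det2 (w l) z) :
    toR z ∈ maxConeInt w l := by
  refine ⟨(det2 z (w (l+1)) : ℝ), (det2 (w l) z : ℝ), by exact_mod_cast ha, by exact_mod_cast hb, ?_⟩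
  rw [← toR_comb]
  exact congrArg toR (cramer hdet z)

/-- The main extraction: half-open cones partition nonzero lattice vectors. -/
lemma partition {n : ℕ} [NeZero n] (w : ZMod n → ℤ × ℤ)
    (hdet : ∀ i, det2 (w i) (w (i + 1)) = 1)
    (hcov : (⋃ i, maxCone w i) = Set.univ)
    (hdisj : ∀ i j, i ≠ j → maxConeInt w i ∩ maxConeInt w j = ∅)
    (z : ℤ × ℤ) (hz : z ≠ 0) :
    ∃! i : ZMod n, 0 < det2 z (w (i + 1)) ∧ 0 ≤ det2 (w i) z := by
  -- existence
  have hex : ∃ i : ZMod n, 0 < det2 z (w (i + 1)) ∧ 0 ≤ det2 (w i) z := by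
    have : toR z ∈ ⋃ i, maxCone w i := by rw [hcov]; trivial
    obtain ⟨S, ⟨i, rfl⟩, a, b, ha, hb, he⟩ := this
    obtain ⟨rfl, rfl⟩ := coords_of_toR (hdet i) he
    have ha' : 0 ≤ det2 z (w (i+1)) := by exact_mod_cast ha
    have hb' : 0 ≤ det2 (w i) z := by exact_mod_cast hb
    rcases lt_or_eq_of_le ha' with hpos | hzero
    · exact ⟨i, hpos, hb'⟩
    · -- z lies on the ray of w (i+1)
      have hz2 : z = det2 (w i) z • w (i+1) := by
        have := cramer (hdet i) z
        rw [← hzero, zero_smul, zero_add] at this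
        exact this
      have hbpos : 0 < det2 (w i) z := by
        rcases lt_or_eq_of_le hb' with h | h
        · exact h
        · exfalso; apply hz; rw [hz2, ← h, zero_smul]
      refine ⟨i + 1, ?_, ?_⟩
      · rw [hz2, det2_smul_left, hdet (i+1)]
        simpa using hbpos
      · rw [hz2, det2_smul_right, det2_self, mul_zero]
  -- uniqueness: first an auxiliary lemma
  obtain ⟨i, hi⟩ := hex
  refine ⟨i, hi, ?_⟩
  intro j hj
  by_contra hne
  -- two distinct half-open cones contain z
  have key : ∀ (p q : ZMod n), p ≠ q →
      0 < det2 z (w (p + 1)) → det2 (w p) z = 0 →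
      0 < det2 z (w (q + 1)) → 0 ≤ det2 (w q) z → False := by
    intro p q hpq hap hbp haq hbq
    set N : ℤ := 1 + |det2 (w (p+1)) (w (q+1))| + |det2 (w q) (w (p+1))| with hN
    set z' : ℤ × ℤ := N • z + w (p+1) with hz'
    have hzp : z = det2 z (w (p+1)) • w p := by
      have := cramer (hdet p) z
      rwa [hbp, zero_smul, add_zero] at this
    have h1 : 0 < det2 z' (w (p+1)) := by
      rw [hz', det2_add_left, det2_smul_left]
      rw [det2_self, add_zero]
      have hN1 : 1 ≤ N := by
        have h5 := abs_nonneg (det2 (w (p+1)) (w (q+1)))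
        have h6 := abs_nonneg (det2 (w q) (w (p+1)))
        linarith
      nlinarith
    have h2 : 0 < det2 (w p) z' := by
      rw [hz', det2_add_right, det2_smul_right]
      have h3 : det2 (w p) z = 0 := hbp
      rw [h3, mul_zero, zero_add, hdet p]; norm_num
    have h4 : 0 < det2 z' (w (q+1)) := by
      rw [hz', det2_add_left, det2_smul_left]
      have habs : -|det2 (w (p+1)) (w (q+1))| ≤ det2 (w (p+1)) (w (q+1)) := neg_abs_le _
      nlinarith [abs_nonneg (det2 (w q) (w (p+1))), abs_nonneg (det2 (w (p+1)) (w (q+1)))]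
    have h5 : 0 < det2 (w q) z' := by
      rw [hz', det2_add_right, det2_smul_right]
      rcases lt_or_eq_of_le hbq with hq1 | hq2
      · have habs : -|det2 (w q) (w (p+1))| ≤ det2 (w q) (w (p+1)) := neg_abs_le _
        nlinarith [abs_nonneg (det2 (w (p+1)) (w (q+1))), abs_nonneg (det2 (w q) (w (p+1)))]
      · -- z on ray w q as well
        have hzq : z = det2 z (w (q+1)) • w q := by
          have := cramer (hdet q) z
          rwa [← hq2, zero_smul, add_zero] at this
        have : det2 z (w (q+1)) * det2 (w q) (w (p+1)) = det2 z (w (p+1)) := by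
          calc det2 z (w (q+1)) * det2 (w q) (w (p+1))
              = det2 (det2 z (w (q+1)) • w q) (w (p+1)) := by rw [det2_smul_left]
            _ = det2 z (w (p+1)) := by rw [← hzq]
        have hpos : 0 < det2 (w q) (w (p+1)) := by
          by_contra hle
          push_neg at hle
          nlinarith
        rw [← hq2, mul_zero, zero_add]
        exact hpos
    have := hdisj p q hpq
    rw [Set.eq_empty_iff_forall_notMem] at this
    exact this (toR z') ⟨mem_int (hdet p) h1 h2, mem_int (hdet q) h4 h5⟩
  rcases eq_or_lt_of_le hi.2 with hbi0 | hbi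
  · exact key i j (fun h => hne h.symm) hi.1 hbi0.symm hj.1 hj.2
  rcases eq_or_lt_of_le hj.2 with hbj0 | hbj
  · exact key j i hne hj.1 hbj0.symm hi.1 hi.2
  · have := hdisj i j (fun h => hne h.symm)
    rw [Set.eq_empty_iff_forall_notMem] at this
    exact this (toR z) ⟨mem_int (hdet i) hi.1 hbi, mem_int (hdet j) hj.1 hbj⟩


section ZLift
variable {n : ℕ} {W : ℤ → ℤ × ℤ}

def Hyp1 (W : ℤ → ℤ × ℤ) : Prop := ∀ j : ℤ, det2 (W j) (W (j+1)) = 1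
def HypP (n : ℕ) (W : ℤ → ℤ × ℤ) : Prop := ∀ j : ℤ, W (j + n) = W j
def HypU (n : ℕ) (W : ℤ → ℤ × ℤ) : Prop := ∀ z : ℤ × ℤ, z ≠ 0 → ∀ j j' : ℤ,
  (0 < det2 z (W (j+1)) ∧ 0 ≤ det2 (W j) z) →
  (0 < det2 z (W (j'+1)) ∧ 0 ≤ det2 (W j') z) → (n:ℤ) ∣ (j - j')
def Hyp4 (W : ℤ → ℤ × ℤ) : Prop := ∀ j : ℤ, det2 (W (j-1)) (W (j+1)) ≠ 1

lemma nodvd {d : ℤ} (h : (n:ℤ) ∣ d) (h1 : 0 < d) (h2 : d < n) : False := by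
  obtain ⟨c, hc⟩ := h
  have hn : 0 < (n:ℤ) := by
    rcases Nat.eq_zero_or_pos n with h | h
    · subst h; simp at h2; omega
    · exact_mod_cast h
  have hc1 : 1 ≤ c := by nlinarith
  nlinarith

lemma Wne0 (h1 : Hyp1 W) (j : ℤ) : W j ≠ 0 := by
  intro h
  have := h1 j
  rw [h, det2_zero_left] at this
  omega

lemma recS (h1 : Hyp1 W) (k j : ℤ) :
    det2 (W k) (W (j+1)) =
      det2 (W (j-1)) (W (j+1)) * det2 (W k) (W j) - det2 (W k) (W (j-1)) := by
  have hb : det2 (W (j-1)) (W j) = 1 := by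
    have := h1 (j-1); rwa [sub_add_cancel] at this
  have hx := cramer hb (W (j+1))
  have hm1 : det2 (W (j+1)) (W j) = -1 := by rw [det2_skew, h1 j]
  rw [hm1] at hx
  calc det2 (W k) (W (j+1)) = det2 (W k) ((-1 : ℤ) • W (j-1) + det2 (W (j-1)) (W (j+1)) • W j) := by
        rw [← hx]
    _ = _ := by rw [det2_add_right, det2_smul_right, det2_smul_right]; ring

lemma pm (h1 : Hyp1 W) {j j' : ℤ} (h0 : det2 (W j) (W j') = 0) :
    W j' = W j ∨ W j' = - W j := by
  obtain ⟨c, hc⟩ := smul_of_det0 ⟨W (j+1), h1 j⟩ h0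
  have h2 : det2 (W j') (W (j'+1)) = 1 := h1 j'
  rw [hc, det2_smul_left] at h2
  rcases Int.eq_one_or_neg_one_of_mul_eq_one h2 with h | h
  · left; rw [hc, h, one_smul]
  · right; rw [hc, h, neg_smul, one_smul]


lemma distinct (h1 : Hyp1 W) (hu : HypU n W) {j j' : ℤ} (h : W j = W j') :
    (n:ℤ) ∣ (j - j') := by
  refine hu (W j) (Wne0 h1 j) j j' ⟨?_, ?_⟩ ⟨?_, ?_⟩
  · rw [h1 j]; norm_num
  · rw [det2_self]
  · rw [h, h1 j']; norm_num
  · rw [← h, det2_self]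

lemma upcross (h1 : Hyp1 W) (hu : HypU n W) {k j : ℤ}
    (ha : det2 (W k) (W j) ≤ 0) (hb : 0 < det2 (W k) (W (j+1))) : (n:ℤ) ∣ (j - k) := by
  refine hu (W k) (Wne0 h1 k) j k ⟨hb, ?_⟩ ⟨?_, ?_⟩
  · rw [det2_skew]; omega
  · rw [h1 k]; norm_num
  · rw [det2_self]

lemma downcross (h1 : Hyp1 W) (hu : HypU n W) {k j j' : ℤ}
    (ha1 : 0 ≤ det2 (W k) (W j)) (ha2 : det2 (W k) (W (j+1)) < 0)
    (hb1 : 0 ≤ det2 (W k) (W j')) (hb2 : det2 (W k) (W (j'+1)) < 0) : (n:ℤ) ∣ (j - j') := by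
  refine hu (-(W k)) (neg_ne_zero.mpr (Wne0 h1 k)) j j' ⟨?_, ?_⟩ ⟨?_, ?_⟩
  · rw [det2_neg_left]; omega
  · rw [det2_neg_right, det2_skew]; omega
  · rw [det2_neg_left]; omega
  · rw [det2_neg_right, det2_skew]; omega

lemma S1chain (h1 : Hyp1 W) (hu : HypU n W) {k j : ℤ} (hj : k+1 ≤ j)
    (h0 : det2 (W k) (W j) ≤ 0) :
    ∀ m, j ≤ m → m ≤ k + n - 1 → det2 (W k) (W m) ≤ 0 := by
  intro m hm
  refine Int.le_induction (motive := fun m _ => m ≤ k + n - 1 → det2 (W k) (W m) ≤ 0) ?_ ?_ m hm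
  · intro _; exact h0
  · intro m hjm ih hm2
    have hprev := ih (by omega)
    by_contra hpos
    push_neg at hpos
    exact nodvd (upcross h1 hu hprev hpos) (by omega) (by omega)

lemma endpointK (h1 : Hyp1 W) (hp : HypP n W) (k : ℤ) :
    det2 (W k) (W (k + n - 1)) = -1 := by
  have h := h1 (k + n - 1)
  have e : (k + (n:ℤ) - 1) + 1 = k + n := by ring
  rw [e, hp k] at h
  rw [det2_skew, h]

lemma Apos (h1 : Hyp1 W) (h4 : Hyp4 W) {k jmax : ℤ}
    (hwin : ∀ m, k+1 ≤ m → m ≤ jmax → 0 < det2 (W k) (W m)) :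
    ∀ m, k+1 ≤ m → m ≤ jmax →
      (m - k ≤ det2 (W k) (W m) ∧ 0 ≤ det2 (W k) (W (m-1)) ∧
        det2 (W k) (W (m-1)) < det2 (W k) (W m)) := by
  intro m hm
  refine Int.le_induction (motive := fun m _ => m ≤ jmax →
      (m - k ≤ det2 (W k) (W m) ∧ 0 ≤ det2 (W k) (W (m-1)) ∧
        det2 (W k) (W (m-1)) < det2 (W k) (W m))) ?_ ?_ m hm
  · intro _
    have e : (k + 1 - 1 : ℤ) = k := by ring
    rw [e, det2_self, h1 k]
    omega
  · intro m hkm ih hle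
    obtain ⟨hb, hprev0, hprevlt⟩ := ih (by omega)
    have hrec := recS h1 k m
    have hd : det2 (W (m-1)) (W (m+1)) ≠ 1 := h4 m
    have hpos : 0 < det2 (W k) (W (m+1)) := hwin (m+1) (by omega) hle
    have e : (m + 1 - 1 : ℤ) = m := by ring
    rw [e]
    rcases le_or_gt (det2 (W (m-1)) (W (m+1))) 0 with hdle | hdgt
    · exfalso
      nlinarith [mul_nonpos_of_nonpos_of_nonneg hdle (by omega : (0:ℤ) ≤ det2 (W k) (W m))]
    · have hd2 : 2 ≤ det2 (W (m-1)) (W (m+1)) := by omega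
      refine ⟨?_, by omega, ?_⟩ <;> nlinarith

lemma Bneg (h1 : Hyp1 W) (hp : HypP n W) (h4 : Hyp4 W) {k jmin : ℤ}
    (hwin : ∀ m, jmin ≤ m → m ≤ k + n - 1 → det2 (W k) (W m) < 0) :
    ∀ m, jmin ≤ m → m ≤ k + n - 1 →
      (det2 (W k) (W m) ≤ m - k - n ∧ det2 (W k) (W (m+1)) ≤ 0 ∧
        det2 (W k) (W m) < det2 (W k) (W (m+1))) := by
  intro m hmin hm
  refine Int.le_induction_down (motive := fun m _ => jmin ≤ m →
      (det2 (W k) (W m) ≤ m - k - n ∧ det2 (W k) (W (m+1)) ≤ 0 ∧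
        det2 (W k) (W m) < det2 (W k) (W (m+1)))) ?_ ?_ m hm hmin
  · intro _
    have e : (k + (n:ℤ) - 1) + 1 = k + n := by ring
    rw [e, hp k, det2_self, endpointK h1 hp]
    omega
  · intro m hm ih hmin'
    obtain ⟨hb, hnext0, hltn⟩ := ih (by omega)
    have hrec := recS h1 k m
    have hd : det2 (W (m-1)) (W (m+1)) ≠ 1 := h4 m
    have hsm : det2 (W k) (W m) < 0 := hwin m (by omega) (by omega)
    have hsm1 : det2 (W k) (W (m-1)) < 0 := hwin (m-1) (by omega) (by omega)
    have e : (m - 1 + 1 : ℤ) = m := by ring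
    rw [e]
    rcases le_or_gt (det2 (W (m-1)) (W (m+1))) 0 with hdle | hdgt
    · exfalso
      nlinarith [mul_nonneg (neg_nonneg.mpr hdle) (neg_nonneg.mpr hsm.le)]
    · have hd2 : 2 ≤ det2 (W (m-1)) (W (m+1)) := by omega
      refine ⟨?_, by omega, ?_⟩ <;> nlinarith


lemma det2_combo (u v : ℤ × ℤ) (a b c d : ℤ) :
    det2 (a • u + b • v) (c • u + d • v) = (a * d - b * c) * det2 u v := by
  simp only [det2, Prod.fst_add, Prod.snd_add, Prod.smul_fst, Prod.smul_snd, smul_eq_mul]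
  ring

lemma step1 (h1 : Hyp1 W) (hp : HypP n W) (h4 : Hyp4 W) (hn : 1 ≤ n) :
    ∃ k : ℤ, det2 (W k) (W (k+2)) ≤ 0 := by
  by_contra hc
  push_neg at hc
  have hd2 : ∀ j : ℤ, 2 ≤ det2 (W (j-1)) (W (j+1)) := by
    intro j
    have h := hc (j-1)
    have e : (j - 1 + 2 : ℤ) = j + 1 := by ring
    rw [e] at h
    have := h4 j
    omega
  have key : ∀ m : ℤ, 1 ≤ m →
      0 ≤ det2 (W 0) (W (m-1)) ∧ det2 (W 0) (W (m-1)) < det2 (W 0) (W m) := by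
    intro m hm
    refine Int.le_induction (motive := fun m _ =>
      0 ≤ det2 (W 0) (W (m-1)) ∧ det2 (W 0) (W (m-1)) < det2 (W 0) (W m)) ?_ ?_ m hm
    · have e : (1 - 1 : ℤ) = 0 := by ring
      rw [e, det2_self]
      have h := h1 0
      rw [zero_add] at h
      omega
    · intro m hm ih
      have hrec := recS h1 0 m
      have hd := hd2 m
      have e : (m + 1 - 1 : ℤ) = m := by ring
      rw [e]
      obtain ⟨ih1, ih2⟩ := ih
      constructor
      · omega
      · nlinarith
  have hk := key n (by exact_mod_cast hn)
  have h0 : det2 (W 0) (W (n:ℤ)) = 0 := by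
    have h := hp 0
    rw [zero_add] at h
    rw [h, det2_self]
  omega

lemma hardZ' (h1 : Hyp1 W) (hp : HypP n W) (hu : HypU n W) (h4 : Hyp4 W)
    (hn5 : 5 ≤ n) (h2 : det2 (W 0) (W 2) ≤ 0) : False := by
  have hnZ : (5:ℤ) ≤ (n:ℤ) := by exact_mod_cast hn5
  have hs1 : det2 (W 0) (W 1) = 1 := by have h := h1 0; rwa [zero_add] at h
  have hS1 : ∀ m : ℤ, 2 ≤ m → m ≤ (n:ℤ) - 1 → det2 (W 0) (W m) ≤ 0 := by
    intro m hm hm2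
    exact S1chain h1 hu (by omega) h2 m hm (by omega)
  have hsn1 : det2 (W 0) (W ((n:ℤ)-1)) = -1 := by
    have h := endpointK h1 hp 0
    have e : (0 + (n:ℤ) - 1) = (n:ℤ) - 1 := by ring
    rwa [e] at h
  by_cases hzero : ∃ m : ℤ, 2 ≤ m ∧ m ≤ (n:ℤ)-1 ∧ det2 (W 0) (W m) = 0
  · -- Case I : the ray opposite to W 0 occurs
    obtain ⟨m, hm2, hmn, hm0⟩ := hzero
    have hWm : W m = - W 0 := by
      rcases pm h1 hm0 with h | h
      · exact absurd (distinct h1 hu h) (fun hd => nodvd hd (by omega) (by omega))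
      · exact h
    have hm2' : m = 2 := by
      by_contra hne
      have hm3 : 3 ≤ m := by omega
      have hs2 : det2 (W 0) (W 2) < 0 := by
        rcases lt_or_eq_of_le h2 with h | h
        · exact h
        · exfalso
          rcases pm h1 h with hh | hh
          · exact nodvd (distinct h1 hu hh) (by omega) (by omega)
          · have hWW : W m = W 2 := by rw [hWm, ← hh]
            exact nodvd (distinct h1 hu hWW) (by omega) (by omega)
      rcases lt_or_eq_of_le hmn with hlt | heq
      · have hsm1le : det2 (W 0) (W (m+1)) ≤ 0 := hS1 (m+1) (by omega) (by omega)
        have hsm1ne : det2 (W 0) (W (m+1)) ≠ 0 := by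
          intro h0
          rcases pm h1 h0 with hh | hh
          · exact nodvd (distinct h1 hu hh) (by omega) (by omega)
          · have hWW : W (m+1) = W m := by rw [hWm, hh]
            exact nodvd (distinct h1 hu hWW) (by omega) (by omega)
        have hb2 : det2 (W 0) (W ((1:ℤ)+1)) < 0 := by
          have e : ((1:ℤ)+1) = 2 := by norm_num
          rw [e]; exact hs2
        have hd := downcross h1 hu (k := 0) (j := m) (j' := 1)
          (by omega) (by omega) (by omega) hb2
        exact nodvd hd (by omega) (by omega)
      · rw [heq] at hm0
        omega
    subst hm2'
    have hs3 : det2 (W 0) (W 3) = -1 := by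
      have h23 : det2 (W 2) (W 3) = 1 := by
        have h := h1 2
        have e : (2 + 1 : ℤ) = 3 := by norm_num
        rwa [e] at h
      rw [hWm, det2_neg_left] at h23
      omega
    have hneg : ∀ j, 3 ≤ j → j ≤ (n:ℤ)-1 → det2 (W 0) (W j) < 0 := by
      intro j h3 hj
      have hle := hS1 j (by omega) hj
      rcases lt_or_eq_of_le hle with h | h
      · exact h
      · exfalso
        rcases pm h1 h with hh | hh
        · exact nodvd (distinct h1 hu hh) (by omega) (by omega)
        · have hWW : W j = W 2 := by rw [hWm, hh]
          exact nodvd (distinct h1 hu hWW) (by omega) (by omega)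
    have hB := (Bneg h1 hp h4 (k := 0) (jmin := 3)
      (fun m hm hm2 => hneg m hm (by omega)) 3 (le_refl 3) (by omega)).1
    omega
  · -- Case II : strict negativity on [2, n-1]
    push_neg at hzero
    have hneg : ∀ m, 2 ≤ m → m ≤ (n:ℤ)-1 → det2 (W 0) (W m) < 0 := fun m a b =>
      lt_of_le_of_ne (hS1 m a b) (hzero m a b)
    have hBn := Bneg h1 hp h4 (k := 0) (jmin := 2)
      (fun m hm hm2 => hneg m hm (by omega))
    have hs2' : det2 (W 0) (W 2) ≤ 2 - (n:ℤ) := by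
      have := (hBn 2 (le_refl 2) (by omega)).1
      omega
    have ht2 : det2 (W 1) (W 2) = 1 := by
      have h := h1 1
      have e : ((1:ℤ) + 1) = 2 := by norm_num
      rwa [e] at h
    by_cases hpe : ∃ p : ℤ, 3 ≤ p ∧ p ≤ (n:ℤ)-1 ∧ det2 (W 1) (W p) ≤ 0
    · -- II.b
      obtain ⟨p, ⟨hp3, hpn, hpt⟩, hmin⟩ := Int.exists_least_of_bdd
        (P := fun p => 3 ≤ p ∧ p ≤ (n:ℤ)-1 ∧ det2 (W 1) (W p) ≤ 0)
        ⟨3, fun z hz => hz.1⟩ hpe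
      have hwinp : ∀ m, 1+1 ≤ m → m ≤ p-1 → 0 < det2 (W 1) (W m) := by
        intro m hm hmp
        by_cases hm2 : m = 2
        · rw [hm2, ht2]; norm_num
        · by_contra hle
          push_neg at hle
          have := hmin m ⟨by omega, by omega, hle⟩
          omega
      have hApos := (Apos h1 h4 (k := 1) (jmax := p-1) hwinp (p-1) (by omega) (le_refl _)).1
      have hdet_pp : det2 (W (p-1)) (W p) = 1 := by
        have h := h1 (p-1); rwa [sub_add_cancel] at h
      have hxp1 := cramer hs1 (W (p-1))
      have hxp := cramer hs1 (W p)
      rw [hxp1, hxp, det2_combo] at hdet_pp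
      rw [hs1, mul_one] at hdet_pp
      have hsple : det2 (W 0) (W p) ≤ p - (n:ℤ) := by
        have := (hBn p (by omega) (by omega)).1
        omega
      have hsp1le : det2 (W 0) (W (p-1)) ≤ (p-1) - (n:ℤ) := by
        have := (hBn (p-1) (by omega) (by omega)).1
        omega
      -- pin down products
      have hsk1 : det2 (W (p-1)) (W 1) = - det2 (W 1) (W (p-1)) := det2_skew _ _
      have hsk2 : det2 (W p) (W 1) = - det2 (W 1) (W p) := det2_skew _ _
      rw [hsk1] at hdet_pp
      have hT1 : 1 ≤ det2 (W 1) (W (p-1)) := by omega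
      have hS1' : det2 (W 0) (W p) ≤ -1 := by omega
      have hC1 : det2 (W 0) (W (p-1)) ≤ -1 := by omega
      have hU0 : 0 ≤ det2 (W p) (W 1) := by omega
      have hprod0 : 0 ≤ (- det2 (W 0) (W (p-1))) * det2 (W p) (W 1) :=
        mul_nonneg (by omega) hU0
      have hprod1 : 0 ≤ (det2 (W 1) (W (p-1)) - 1) * ((- det2 (W 0) (W p)) - 1) :=
        mul_nonneg (by omega) (by omega)
      have hsum : det2 (W 1) (W (p-1)) - det2 (W 0) (W p) ≤ 2 := by nlinarith
      omega
    · -- II.a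
      push_neg at hpe
      have hwin1 : ∀ m, 1+1 ≤ m → m ≤ (n:ℤ)-1 → 0 < det2 (W 1) (W m) := by
        intro m hm hmn
        by_cases hm2 : m = 2
        · rw [hm2, ht2]; norm_num
        · exact hpe m (by omega) hmn
      have hApos := (Apos h1 h4 (k := 1) (jmax := (n:ℤ)-1) hwin1 ((n:ℤ)-1)
        (by omega) (le_refl _)).1
      -- hApos : (n-1) - 1 ≤ det2 (W 1) (W (n-1))
      have hun : det2 (W ((n:ℤ)-1)) (W ((n:ℤ)-1+1)) = 1 := h1 ((n:ℤ)-1)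
      have hWn1 : W ((n:ℤ)+1) = W 1 := by
        have h := hp 1
        have e : ((1:ℤ) + n) = (n:ℤ)+1 := by ring
        rwa [e] at h
      have hun1 : det2 (W ((n:ℤ)-1)) (W ((n:ℤ)+1)) = - det2 (W 1) (W ((n:ℤ)-1)) := by
        rw [hWn1, det2_skew]
      have hS1u : ∀ m, (n:ℤ)+1 ≤ m → m ≤ ((n:ℤ)-1) + n - 1 → det2 (W ((n:ℤ)-1)) (W m) ≤ 0 :=
        S1chain h1 hu (by omega) (by rw [hun1]; omega)
      have hnegu : ∀ m, (n:ℤ)+1 ≤ m → m ≤ ((n:ℤ)-1) + n - 1 → det2 (W ((n:ℤ)-1)) (W m) < 0 := by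
        intro m hm hm2
        have hle := hS1u m hm hm2
        rcases lt_or_eq_of_le hle with h | h
        · exact h
        · exfalso
          rcases pm h1 h with hh | hh
          · exact nodvd (distinct h1 hu hh) (by omega) (by omega)
          · rcases lt_or_eq_of_le hm2 with hlt | heq
            · have hle1 := hS1u (m+1) (by omega) (by omega)
              have hne1 : det2 (W ((n:ℤ)-1)) (W (m+1)) ≠ 0 := by
                intro h0
                rcases pm h1 h0 with hh1 | hh1
                · exact nodvd (distinct h1 hu hh1) (by omega) (by omega)
                · have hWW : W (m+1) = W m := by rw [hh, hh1]
                  exact nodvd (distinct h1 hu hWW) (by omega) (by omega)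
              have hbj : det2 (W ((n:ℤ)-1)) (W ((n:ℤ)))  = 1 := by
                have e : ((n:ℤ)-1+1) = (n:ℤ) := by ring
                rwa [e] at hun
              have hd := downcross h1 hu (k := (n:ℤ)-1) (j := m) (j' := (n:ℤ))
                (by omega) (by omega) (by omega) (by rw [hun1]; omega)
              exact nodvd hd (by omega) (by omega)
            · have hend := endpointK h1 hp ((n:ℤ)-1)
              rw [← heq] at hend
              omega
      have hBu := (Bneg h1 hp h4 (k := (n:ℤ)-1) (jmin := (n:ℤ)+1) hnegu
        ((n:ℤ)+2) (by omega) (by omega)).1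
      -- expansion of det2 (W (n-1)) (W (n+2))
      have hWn2 : W ((n:ℤ)+2) = W 2 := by
        have h := hp 2
        have e : ((2:ℤ) + n) = (n:ℤ)+2 := by ring
        rwa [e] at h
      have hx := cramer hs1 (W ((n:ℤ)-1))
      have hexp : det2 (W ((n:ℤ)-1)) (W ((n:ℤ)+2)) =
          det2 (W ((n:ℤ)-1)) (W 1) * det2 (W 0) (W 2)
            + det2 (W 0) (W ((n:ℤ)-1)) * det2 (W 1) (W 2) := by
        rw [hWn2]
        nth_rewrite 1 [hx]
        rw [det2_add_left, det2_smul_left, det2_smul_left]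
      rw [hexp, hsn1, ht2] at hBu
      have hskew : det2 (W ((n:ℤ)-1)) (W 1) = - det2 (W 1) (W ((n:ℤ)-1)) := det2_skew _ _
      nlinarith [hApos, hs2', hBu]



lemma hardZ (h1 : Hyp1 W) (hp : HypP n W) (hu : HypU n W) (h4 : Hyp4 W) (hn5 : 5 ≤ n) :
    False := by
  obtain ⟨c, hc⟩ := step1 h1 hp h4 (by omega)
  have h1' : Hyp1 (fun j => W (j + c)) := by
    intro j
    show det2 (W (j + c)) (W (j + 1 + c)) = 1
    have e : (j + 1 + c : ℤ) = (j + c) + 1 := by ring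
    rw [e]; exact h1 (j + c)
  have hp' : HypP n (fun j => W (j + c)) := by
    intro j
    show W (j + n + c) = W (j + c)
    have e : (j + (n:ℤ) + c) = (j + c) + n := by ring
    rw [e]; exact hp (j + c)
  have hu' : HypU n (fun j => W (j + c)) := by
    intro z hz j j' hj hj'
    have b1 : 0 < det2 z (W ((j + c) + 1)) := by
      have e : (j + c) + 1 = j + 1 + c := by ring
      rw [e]; exact hj.1
    have b3 : 0 < det2 z (W ((j' + c) + 1)) := by
      have e : (j' + c) + 1 = j' + 1 + c := by ring
      rw [e]; exact hj'.1
    have hd := hu z hz (j + c) (j' + c) ⟨b1, hj.2⟩ ⟨b3, hj'.2⟩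
    have e : (j + c) - (j' + c) = j - j' := by ring
    rwa [e] at hd
  have h4' : Hyp4 (fun j => W (j + c)) := by
    intro j
    show det2 (W (j - 1 + c)) (W (j + 1 + c)) ≠ 1
    have e1 : (j - 1 + c : ℤ) = (j + c) - 1 := by ring
    have e2 : (j + 1 + c : ℤ) = (j + c) + 1 := by ring
    rw [e1, e2]; exact h4 (j + c)
  have h2' : det2 ((fun j => W (j + c)) 0) ((fun j => W (j + c)) 2) ≤ 0 := by
    show det2 (W (0 + c)) (W (2 + c)) ≤ 0
    have e0 : (0 + c : ℤ) = c := by ring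
    have e2 : (2 + c : ℤ) = c + 2 := by ring
    rw [e0, e2]; exact hc
  exact hardZ' h1' hp' hu' h4' hn5 h2'

end ZLift


section Blowdown

lemma sum_zmod {n : ℕ} [NeZero n] (f : ZMod n → ℤ) :
    ∑ i, f i = ∑ j ∈ Finset.range n, f ((j : ℕ) : ZMod n) := by
  refine Finset.sum_nbij' (i := fun (a : ZMod n) => a.val)
    (j := fun (a : ℕ) => ((a : ℕ) : ZMod n)) ?_ ?_ ?_ ?_ ?_
  · intro a _; exact Finset.mem_range.mpr a.val_lt
  · intro a _; exact Finset.mem_univ _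
  · intro a _; exact ZMod.natCast_rightInverse a
  · intro a ha; exact ZMod.val_cast_of_lt (Finset.mem_range.mp ha)
  · intro a _; rw [ZMod.natCast_rightInverse a]


variable {m : ℕ} [NeZero m]

lemma blowdown (h5 : 5 ≤ m + 1) (v : ZMod (m+1) → ℤ × ℤ)
    (hdet_v : ∀ i, det2 (v i) (v (i+1)) = 1)
    (hpart_v : ∀ z : ℤ × ℤ, z ≠ 0 → ∃! i : ZMod (m+1),
      0 < det2 z (v (i+1)) ∧ 0 ≤ det2 (v i) z)
    (hrel_v : v (-1) = v (-2) + v 0) :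
    (∀ i : ZMod m, det2 (v ((i.val : ℕ) : ZMod (m+1))) (v (((i+1).val : ℕ) : ZMod (m+1))) = 1) ∧
    (∀ z : ℤ × ℤ, z ≠ 0 → ∃! i : ZMod m,
      0 < det2 z (v (((i+1).val : ℕ) : ZMod (m+1))) ∧ 0 ≤ det2 (v ((i.val : ℕ) : ZMod (m+1))) z) ∧
    ∑ i : ZMod (m+1), det2 (v i) (v (i+2)) =
      (∑ i : ZMod m, det2 (v ((i.val : ℕ) : ZMod (m+1))) (v (((i+2).val : ℕ) : ZMod (m+1)))) + 3 := by
  have hm4 : 4 ≤ m := by omega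
  haveI : Fact (1 < m) := ⟨by omega⟩
  -- cast facts in ZMod (m+1)
  have hc1 : ((m : ℕ) : ZMod (m+1)) = -1 := by
    have h : ((m : ℕ) : ZMod (m+1)) + 1 = 0 := by
      have e : ((m + 1 : ℕ) : ZMod (m+1)) = 0 := ZMod.natCast_self (m+1)
      push_cast at e
      linear_combination e
    linear_combination h
  have hc2 : ((m - 1 : ℕ) : ZMod (m+1)) = -2 := by
    have h : ((m - 1 : ℕ) : ZMod (m+1)) + 2 = 0 := by
      have e : ((m - 1 + 2 : ℕ) : ZMod (m+1)) = ((m + 1 : ℕ) : ZMod (m+1)) := by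
        rw [show m - 1 + 2 = m + 1 from by omega]
      push_cast at e
      rw [hc1] at e
      linear_combination e
    linear_combination h
  have hc3 : ((m - 2 : ℕ) : ZMod (m+1)) = -3 := by
    have h : ((m - 2 : ℕ) : ZMod (m+1)) + 3 = 0 := by
      have e : ((m - 2 + 3 : ℕ) : ZMod (m+1)) = ((m + 1 : ℕ) : ZMod (m+1)) := by
        rw [show m - 2 + 3 = m + 1 from by omega]
      push_cast at e
      rw [hc1] at e
      linear_combination e
    linear_combination h
  -- val facts in ZMod m
  have hval1 : (1 : ZMod m).val = 1 := ZMod.val_one m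
  have hval2 : (2 : ZMod m).val = 2 := by
    rw [show (2 : ZMod m) = ((2 : ℕ) : ZMod m) from by push_cast; ring]
    exact ZMod.val_cast_of_lt (by omega)
  have hsucc : ∀ i : ZMod m, i.val < m - 1 → (i + 1).val = i.val + 1 := by
    intro i h
    rw [ZMod.val_add, hval1]
    exact Nat.mod_eq_of_lt (by omega)
  have hadd2 : ∀ i : ZMod m, (i + 2).val = (i.val + 2) % m := by
    intro i
    rw [ZMod.val_add, hval2]
  have hwrap : ∀ i : ZMod m, i.val = m - 1 → i + 1 = 0 := by
    intro i h
    have hi : i = ((m - 1 : ℕ) : ZMod m) := by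
      have h2 := (ZMod.natCast_rightInverse (n := m) i)
      rw [h] at h2
      exact h2.symm
    rw [hi, show ((m - 1 : ℕ) : ZMod m) + 1 = ((m - 1 + 1 : ℕ) : ZMod m) from by push_cast; ring,
      show m - 1 + 1 = m from by omega, ZMod.natCast_self]
  -- the three relevant v-determinant identities
  have hrel2 : v (-1) = v (-2) + v 0 := hrel_v
  have hAB : ∀ z : ℤ × ℤ, det2 z (v (-1)) = det2 z (v (-2)) + det2 z (v 0) := by
    intro z; rw [hrel2, det2_add_right]
  have hBA : ∀ z : ℤ × ℤ, det2 (v (-1)) z = det2 (v (-2)) z + det2 (v 0) z := by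
    intro z; rw [hrel2, det2_add_left]
  -- H1 for the blown-down fan
  have H1u : ∀ i : ZMod m,
      det2 (v ((i.val : ℕ) : ZMod (m+1))) (v (((i+1).val : ℕ) : ZMod (m+1))) = 1 := by
    intro i
    by_cases hlt : i.val < m - 1
    · rw [hsucc i hlt, show (((i.val + 1 : ℕ)) : ZMod (m+1)) = ((i.val : ℕ) : ZMod (m+1)) + 1
        from by push_cast; ring]
      exact hdet_v _
    · have hival : i.val = m - 1 := by have := ZMod.val_lt i; omega
      rw [hwrap i hival, hival, ZMod.val_zero, Nat.cast_zero, hc2]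
      -- det2 (v (-2)) (v 0) = 1
      have h := hdet_v (-2)
      rw [show ((-2 : ZMod (m+1)) + 1) = -1 from by ring, hAB, det2_self, zero_add] at h
      exact h
  -- the partition property for the blown-down fan
  have H2u : ∀ z : ℤ × ℤ, z ≠ 0 → ∃! i : ZMod m,
      0 < det2 z (v (((i+1).val : ℕ) : ZMod (m+1))) ∧
      0 ≤ det2 (v ((i.val : ℕ) : ZMod (m+1))) z := by
    intro z hz
    obtain ⟨iv, hiv, huniq⟩ := hpart_v z hz
    -- the equivalence for interior indices
    have hPlt : ∀ i : ZMod m, i.val < m - 1 →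
        ((0 < det2 z (v (((i+1).val : ℕ) : ZMod (m+1))) ∧
          0 ≤ det2 (v ((i.val : ℕ) : ZMod (m+1))) z) ↔
         (0 < det2 z (v (((i.val : ℕ) : ZMod (m+1)) + 1)) ∧
          0 ≤ det2 (v ((i.val : ℕ) : ZMod (m+1))) z)) := by
      intro i hlt
      rw [hsucc i hlt, show (((i.val + 1 : ℕ)) : ZMod (m+1)) = ((i.val : ℕ) : ZMod (m+1)) + 1
        from by push_cast; ring]
    -- the equivalence for the last index
    have hPlast : ∀ i : ZMod m, i.val = m - 1 →
        ((0 < det2 z (v (((i+1).val : ℕ) : ZMod (m+1))) ∧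
          0 ≤ det2 (v ((i.val : ℕ) : ZMod (m+1))) z) ↔
         ((0 < det2 z (v ((-2 : ZMod (m+1)) + 1)) ∧ 0 ≤ det2 (v (-2 : ZMod (m+1))) z) ∨
          (0 < det2 z (v ((-1 : ZMod (m+1)) + 1)) ∧ 0 ≤ det2 (v (-1 : ZMod (m+1))) z))) := by
      intro i hival
      rw [hwrap i hival, hival, ZMod.val_zero, Nat.cast_zero, hc2]
      rw [show ((-2 : ZMod (m+1)) + 1) = -1 from by ring,
        show ((-1 : ZMod (m+1)) + 1) = 0 from by ring]
      have e1 : det2 z (v (-1)) = det2 z (v (-2)) + det2 z (v 0) := hAB z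
      have e2 : det2 (v (-1)) z = det2 (v (-2)) z + det2 (v 0) z := hBA z
      have e3 : det2 (v 0) z = - det2 z (v 0) := by rw [det2_skew]
      have e4 : det2 z (v (-2)) = - det2 (v (-2)) z := by rw [det2_skew]
      constructor
      · intro ⟨ha, hb⟩
        rcases le_or_gt (det2 z (v 0)) (det2 (v (-2)) z) with h | h
        · right; exact ⟨ha, by omega⟩
        · left; exact ⟨by omega, hb⟩
      · intro h
        rcases h with ⟨ha, hb⟩ | ⟨ha, hb⟩
        · exact ⟨by omega, hb⟩
        · constructor
          · omega
          · have : det2 (v (-2)) z = det2 (v (-1)) z - det2 (v 0) z := by omega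
            omega
    -- existence
    have hex : ∃ i : ZMod m,
        0 < det2 z (v (((i+1).val : ℕ) : ZMod (m+1))) ∧
        0 ≤ det2 (v ((i.val : ℕ) : ZMod (m+1))) z := by
      have hivlt := ZMod.val_lt iv
      rcases lt_or_ge iv.val (m - 1) with hsmall | hbig
      · refine ⟨((iv.val : ℕ) : ZMod m), ?_⟩
        have hvv : (((iv.val : ℕ) : ZMod m)).val = iv.val := ZMod.val_cast_of_lt (by omega)
        rw [hPlt _ (by rw [hvv]; omega)]
        rw [hvv, ZMod.natCast_rightInverse iv]
        exact hiv
      · -- iv is -2 or -1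
        refine ⟨((m - 1 : ℕ) : ZMod m), ?_⟩
        have hvv : (((m - 1 : ℕ) : ZMod m)).val = m - 1 := ZMod.val_cast_of_lt (by omega)
        rw [hPlast _ hvv]
        rcases Nat.lt_or_ge iv.val m with hvm | hvm
        · -- iv.val = m - 1, iv = -2
          have : iv = ((m - 1 : ℕ) : ZMod (m+1)) := by
            have h2 := (ZMod.natCast_rightInverse (n := m+1) iv)
            rw [show iv.val = m - 1 from by omega] at h2
            exact h2.symm
          left
          rw [show (-2 : ZMod (m+1)) = iv from by rw [this, hc2]]
          exact hiv
        · -- iv.val = m, iv = -1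
          have : iv = ((m : ℕ) : ZMod (m+1)) := by
            have h2 := (ZMod.natCast_rightInverse (n := m+1) iv)
            rw [show iv.val = m from by omega] at h2
            exact h2.symm
          right
          rw [show (-1 : ZMod (m+1)) = iv from by rw [this, hc1]]
          exact hiv
    -- uniqueness
    obtain ⟨i0, hi0⟩ := hex
    refine ⟨i0, hi0, ?_⟩
    have huval : ∀ y : ZMod m,
        (0 < det2 z (v (((y+1).val : ℕ) : ZMod (m+1))) ∧
         0 ≤ det2 (v ((y.val : ℕ) : ZMod (m+1))) z) →
          (y.val < m - 1 ∧ (y.val : ℕ) = iv.val) ∨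
           (y.val = m - 1 ∧ (iv.val = m - 1 ∨ iv.val = m)) := by
      intro y hy
      by_cases hlt : y.val < m - 1
      · left
        refine ⟨hlt, ?_⟩
        have := huniq _ ((hPlt y hlt).mp hy)
        have hvv : (((y.val : ℕ) : ZMod (m+1))).val = y.val := ZMod.val_cast_of_lt (by omega)
        rw [← this, hvv]
      · right
        have hival : y.val = m - 1 := by have := ZMod.val_lt y; omega
        refine ⟨hival, ?_⟩
        rcases (hPlast y hival).mp hy with h | h
        · left
          have := huniq _ h
          rw [← this, ← hc2]
          exact ZMod.val_cast_of_lt (by omega)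
        · right
          have := huniq _ h
          rw [← this, ← hc1]
          exact ZMod.val_cast_of_lt (by omega)
    intro y hy
    have h1 := huval y hy
    have h2 := huval i0 hi0
    have hneq : y.val = i0.val := by
      rcases h1 with ⟨h1a, h1b⟩ | ⟨h1a, h1b⟩ <;> rcases h2 with ⟨h2a, h2b⟩ | ⟨h2a, h2b⟩ <;> omega
    have hy' := (ZMod.natCast_rightInverse (n := m) y).symm
    have hi0' := (ZMod.natCast_rightInverse (n := m) i0).symm
    rw [hy', hi0', hneq]
  refine ⟨H1u, H2u, ?_⟩
  -- helper determinant values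
  have hd20 : det2 (v (-2 : ZMod (m+1))) (v 0) = 1 := by
    have h := hdet_v (-2)
    rw [show ((-2 : ZMod (m+1)) + 1) = -1 from by ring, hAB, det2_self, zero_add] at h
    exact h
  have hd31 : det2 (v (-3 : ZMod (m+1))) (v (-2)) = 1 := by
    have h := hdet_v (-3)
    rwa [show ((-3 : ZMod (m+1)) + 1) = -2 from by ring] at h
  have hd01 : det2 (v (0 : ZMod (m+1))) (v 1) = 1 := by
    have h := hdet_v 0
    rwa [zero_add] at h
  -- the sum identity
  rw [sum_zmod (fun i => det2 (v i) (v (i+2))),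
    sum_zmod (n := m) (fun i => det2 (v ((i.val : ℕ) : ZMod (m+1))) (v (((i+2).val : ℕ) : ZMod (m+1))))]
  have peel3 : ∀ (F : ℕ → ℤ) (k : ℕ), ∑ j ∈ Finset.range (k+3), F j =
      ∑ j ∈ Finset.range k, F j + F k + F (k+1) + F (k+2) := by
    intro F k
    rw [show k+3 = (k+2)+1 from by ring, Finset.sum_range_succ,
      show k+2 = (k+1)+1 from by ring, Finset.sum_range_succ, Finset.sum_range_succ]
  have peel2 : ∀ (F : ℕ → ℤ) (k : ℕ), ∑ j ∈ Finset.range (k+2), F j =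
      ∑ j ∈ Finset.range k, F j + F k + F (k+1) := by
    intro F k
    rw [show k+2 = (k+1)+1 from by ring, Finset.sum_range_succ, Finset.sum_range_succ]
  have hpeelL := peel3 (fun j => det2 (v ((j : ℕ) : ZMod (m+1))) (v (((j : ℕ) : ZMod (m+1)) + 2))) (m-2)
  have hpeelR := peel2 (fun j => det2 (v (((((j : ℕ) : ZMod m)).val : ℕ) : ZMod (m+1)))
      (v ((((((j : ℕ) : ZMod m)) + 2).val : ℕ) : ZMod (m+1)))) (m-2)
  rw [show m - 2 + 3 = m + 1 from by omega, show m - 2 + 2 = m from by omega,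
    show m - 2 + 1 = m - 1 from by omega] at hpeelL
  rw [show m - 2 + 2 = m from by omega, show m - 2 + 1 = m - 1 from by omega] at hpeelR

  rw [hpeelL, hpeelR]
  have hsame : ∑ j ∈ Finset.range (m-2),
      det2 (v ((j : ℕ) : ZMod (m+1))) (v (((j : ℕ) : ZMod (m+1)) + 2)) =
      ∑ j ∈ Finset.range (m-2),
      det2 (v (((((j : ℕ) : ZMod m)).val : ℕ) : ZMod (m+1)))
        (v ((((((j : ℕ) : ZMod m)) + 2).val : ℕ) : ZMod (m+1))) := by
    refine Finset.sum_congr rfl ?_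
    intro j hj
    have hjlt := Finset.mem_range.mp hj
    have hv1 : ((((j : ℕ) : ZMod m)).val : ℕ) = j := ZMod.val_cast_of_lt (by omega)
    rw [hadd2, hv1, Nat.mod_eq_of_lt (by omega),
      show (((j + 2 : ℕ)) : ZMod (m+1)) = ((j : ℕ) : ZMod (m+1)) + 2 from by push_cast; ring]
  have hf1 : det2 (v ((m - 2 : ℕ) : ZMod (m+1))) (v (((m - 2 : ℕ) : ZMod (m+1)) + 2)) =
      1 + det2 (v (((((m - 2 : ℕ) : ZMod m)).val : ℕ) : ZMod (m+1)))
        (v ((((((m - 2 : ℕ) : ZMod m)) + 2).val : ℕ) : ZMod (m+1))) := by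
    have hvv : (((m - 2 : ℕ) : ZMod m)).val = m - 2 := ZMod.val_cast_of_lt (by omega)
    rw [hadd2, hvv, show (m - 2 + 2) % m = 0 from by
      rw [show m - 2 + 2 = m from by omega]; exact Nat.mod_self m]
    rw [hc3, show ((-3 : ZMod (m+1)) + 2) = -1 from by ring, hAB, hd31, Nat.cast_zero]
  have hf2 : det2 (v ((m - 1 : ℕ) : ZMod (m+1))) (v (((m - 1 : ℕ) : ZMod (m+1)) + 2)) = 1 := by
    rw [hc2, show ((-2 : ZMod (m+1)) + 2) = 0 from by ring]
    exact hd20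
  have hf3 : det2 (v ((m : ℕ) : ZMod (m+1))) (v (((m : ℕ) : ZMod (m+1)) + 2)) =
      det2 (v (((((m - 1 : ℕ) : ZMod m)).val : ℕ) : ZMod (m+1)))
        (v ((((((m - 1 : ℕ) : ZMod m)) + 2).val : ℕ) : ZMod (m+1))) + 1 := by
    have hvv : (((m - 1 : ℕ) : ZMod m)).val = m - 1 := ZMod.val_cast_of_lt (by omega)
    rw [hadd2, hvv, show (m - 1 + 2) % m = 1 from by
      rw [show m - 1 + 2 = m + 1 from by omega, Nat.add_mod_left]; exact Nat.mod_eq_of_lt (by omega), Nat.cast_one]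
    rw [hc1, show ((-1 : ZMod (m+1)) + 2) = 1 from by ring, hBA (v 1), hd01, hc2]
  rw [hsame, hf1, hf2, hf3]
  ring

end Blowdown

section Main

theorem key : ∀ (n : ℕ) [NeZero n] (w : ZMod n → ℤ × ℤ),
    (∀ i, det2 (w i) (w (i+1)) = 1) →
    (∀ z : ℤ × ℤ, z ≠ 0 → ∃! i : ZMod n, 0 < det2 z (w (i+1)) ∧ 0 ≤ det2 (w i) z) →
    ∑ i : ZMod n, det2 (w i) (w (i+2)) = 3 * (n:ℤ) - 12 := by
  intro n
  induction n using Nat.strong_induction_on with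
  | _ n IH =>
  intro inst w hdet hpart
  have hn : 0 < n := Nat.pos_of_ne_zero inst.out
  by_cases h5 : 5 ≤ n
  · -- inductive step via blowdown
    obtain ⟨m, rfl⟩ : ∃ m : ℕ, n = m + 1 := ⟨n - 1, by omega⟩
    haveI hnzm : NeZero m := ⟨by omega⟩
    haveI : Fact (1 < m) := ⟨by omega⟩
    -- ℤ-lift
    have hW1 : Hyp1 (fun j : ℤ => w (j : ZMod (m+1))) := by
      intro j
      show det2 (w ((j : ℤ) : ZMod (m+1))) (w (((j + 1 : ℤ)) : ZMod (m+1))) = 1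
      rw [show (((j + 1 : ℤ)) : ZMod (m+1)) = ((j : ℤ) : ZMod (m+1)) + 1 from by push_cast; ring]
      exact hdet _
    have hWp : HypP (m+1) (fun j : ℤ => w (j : ZMod (m+1))) := by
      intro j
      show w (((j + ((m+1 : ℕ) : ℤ)) : ℤ) : ZMod (m+1)) = w ((j : ℤ) : ZMod (m+1))
      apply congrArg
      push_cast
      linear_combination (ZMod.natCast_self' m)
    have hWu : HypU (m+1) (fun j : ℤ => w (j : ZMod (m+1))) := by
      intro z hz j j' hj hj'
      obtain ⟨i, _, huniq⟩ := hpart z hz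
      have key1 : ∀ a : ℤ, (0 < det2 z (w (((a + 1 : ℤ)) : ZMod (m+1))) ∧
          0 ≤ det2 (w ((a : ℤ) : ZMod (m+1))) z) → ((a : ℤ) : ZMod (m+1)) = i := by
        intro a ha
        apply huniq
        refine ⟨?_, ha.2⟩
        have h := ha.1
        rw [show (((a + 1 : ℤ)) : ZMod (m+1)) = ((a : ℤ) : ZMod (m+1)) + 1
          from by push_cast; ring] at h
        exact h
      have e1 := key1 j hj
      have e2 := key1 j' hj'
      have heq : ((j : ℤ) : ZMod (m+1)) = ((j' : ℤ) : ZMod (m+1)) := by rw [e1, e2]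
      have hmod := (ZMod.intCast_eq_intCast_iff _ _ _).mp heq
      exact Int.ModEq.dvd hmod.symm
    have hex1 : ∃ i₀ : ZMod (m+1), det2 (w (i₀ - 1)) (w (i₀ + 1)) = 1 := by
      by_contra hno
      push_neg at hno
      refine hardZ hW1 hWp hWu ?_ h5
      intro j
      show det2 (w (((j - 1 : ℤ)) : ZMod (m+1))) (w (((j + 1 : ℤ)) : ZMod (m+1))) ≠ 1
      rw [show (((j - 1 : ℤ)) : ZMod (m+1)) = ((j : ℤ) : ZMod (m+1)) - 1 from by push_cast; ring,
        show (((j + 1 : ℤ)) : ZMod (m+1)) = ((j : ℤ) : ZMod (m+1)) + 1 from by push_cast; ring]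
      exact hno _
    obtain ⟨i₀, hi₀⟩ := hex1
    -- the special vector relation
    have hbasis : det2 (w (i₀ - 1)) (w i₀) = 1 := by
      have h := hdet (i₀ - 1); rwa [sub_add_cancel] at h
    have hrel : w i₀ = w (i₀ - 1) + w (i₀ + 1) := by
      have hx := cramer hbasis (w (i₀ + 1))
      rw [hi₀] at hx
      have hm1 : det2 (w (i₀ + 1)) (w i₀) = -1 := by rw [det2_skew, hdet i₀]
      rw [hm1, neg_smul, one_smul, one_smul] at hx
      rw [hx]; abel
    -- the shifted fan
    have hdet_v : ∀ i : ZMod (m+1), det2 (w (i + (i₀+1))) (w ((i+1) + (i₀+1))) = 1 := by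
      intro i
      rw [show (i+1) + (i₀+1) = (i + (i₀+1)) + 1 from by ring]
      exact hdet _
    have hpart_v : ∀ z : ℤ × ℤ, z ≠ 0 → ∃! i : ZMod (m+1),
        0 < det2 z (w ((i+1) + (i₀+1))) ∧ 0 ≤ det2 (w (i + (i₀+1))) z := by
      intro z hz
      obtain ⟨i, hi, huniq⟩ := hpart z hz
      refine ⟨i - (i₀+1), ⟨?_, ?_⟩, ?_⟩
      · rw [show (i - (i₀+1) + 1) + (i₀+1) = i + 1 from by ring]; exact hi.1
      · rw [show i - (i₀+1) + (i₀+1) = i from by ring]; exact hi.2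
      · intro y hy
        have h := huniq (y + (i₀+1))
          ⟨by rw [show (y + (i₀+1)) + 1 = (y + 1) + (i₀+1) from by ring]; exact hy.1, hy.2⟩
        rw [← h]; ring
    have hrel_v : (fun i : ZMod (m+1) => w (i + (i₀+1))) (-1) =
        (fun i : ZMod (m+1) => w (i + (i₀+1))) (-2) +
        (fun i : ZMod (m+1) => w (i + (i₀+1))) 0 := by
      show w (-1 + (i₀+1)) = w (-2 + (i₀+1)) + w (0 + (i₀+1))
      rw [show (-1 : ZMod (m+1)) + (i₀ + 1) = i₀ from by ring,
        show (-2 : ZMod (m+1)) + (i₀ + 1) = i₀ - 1 from by ring,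
        show (0 : ZMod (m+1)) + (i₀ + 1) = i₀ + 1 from by ring]
      exact hrel
    obtain ⟨H1u, H2u, hsum⟩ := blowdown (m := m) h5 (fun i => w (i + (i₀+1)))
      hdet_v hpart_v hrel_v
    have hIH := IH m (by omega) (fun i : ZMod m => w (((i.val : ℕ) : ZMod (m+1)) + (i₀+1)))
      H1u H2u
    -- shift invariance of the sum
    have hshift : ∑ i : ZMod (m+1), det2 (w i) (w (i+2)) =
        ∑ i : ZMod (m+1), det2 (w (i + (i₀+1))) (w ((i + 2) + (i₀+1))) := by
      refine (Fintype.sum_equiv (Equiv.addRight (i₀+1))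
        (fun i => det2 (w (i + (i₀+1))) (w ((i + 2) + (i₀+1))))
        (fun i => det2 (w i) (w (i+2))) ?_).symm
      intro x
      simp only [Equiv.coe_addRight]
      rw [show x + 2 + (i₀+1) = (x + (i₀+1)) + 2 from by ring]
    have hIH' : ∑ i : ZMod m, det2 (w (((i.val : ℕ) : ZMod (m+1)) + (i₀+1)))
        (w ((((i+2).val : ℕ) : ZMod (m+1)) + (i₀+1))) = 3*(m:ℤ) - 12 := hIH
    rw [hshift, hsum, hIH']
    push_cast
    ring
  · -- base cases
    interval_cases n
    · exfalso
      have h := hdet 0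
      have e : ((0:ZMod 1) + 1) = 0 := by decide
      rw [e, det2_self] at h
      omega
    · exfalso
      have h0 := hdet 0
      have h1 := hdet 1
      have e0 : ((0:ZMod 2) + 1) = 1 := by decide
      have e1 : ((1:ZMod 2) + 1) = 0 := by decide
      rw [e0] at h0
      rw [e1, det2_skew] at h1
      omega
    · have hterm : ∀ i : ZMod 3, det2 (w i) (w (i+2)) = -1 := by
        intro i
        have h := hdet (i+2)
        have e : (i+2)+1 = i := by
          have h3 : (3 : ZMod 3) = 0 := by decide
          calc (i+2)+1 = i + 3 := by ring
            _ = i := by rw [h3, add_zero]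
        rw [e, det2_skew] at h
        omega
      rw [Finset.sum_congr rfl (fun i _ => hterm i)]
      simp
    · have hsum2 : ∑ i : ZMod 4, det2 (w i) (w (i+2))
          = ∑ i : ZMod 4, det2 (w (i+2)) (w ((i+2)+2)) :=
        (Fintype.sum_equiv (Equiv.addRight (2 : ZMod 4))
          (fun i => det2 (w (i+2)) (w ((i+2)+2)))
          (fun i => det2 (w i) (w (i+2))) (fun i => rfl)).symm
      have hterm : ∀ i : ZMod 4, det2 (w (i+2)) (w ((i+2)+2)) = - det2 (w i) (w (i+2)) := by
        intro i
        have e : (i+2)+2 = i := by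
          have h4 : (4 : ZMod 4) = 0 := by decide
          calc (i+2)+2 = i + 4 := by ring
            _ = i := by rw [h4, add_zero]
        rw [e, det2_skew]
      rw [Finset.sum_congr rfl (fun i _ => hterm i), Finset.sum_neg_distrib] at hsum2
      · omega
      
end Main


end Noether

/-- Noether's formula for smooth complete toric surfaces:
for a complete unimodular fan in `ℝ²` with rays `w 1, …, w n` in cyclic order
(consecutive pairs spanning the maximal cones, `det (w i) (w (i+1)) = 1`, the closed
maximal cones covering the plane and their interiors pairwise disjoint), if
`-τ i • w i = w (i-1) + w (i+1)` for every `i`, then `12 = 3n + ∑ τ i`. -/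
theorem toric_surface_noether (n : ℕ) [NeZero n] (w : ZMod n → ℤ × ℤ) (τ : ZMod n → ℤ)
    (hdet : ∀ i, det2 (w i) (w (i + 1)) = 1)
    (hcov : (⋃ i, maxCone w i) = Set.univ)
    (hdisj : ∀ i j, i ≠ j → maxConeInt w i ∩ maxConeInt w j = ∅)
    (hτ : ∀ i, w (i - 1) + w (i + 1) = (-τ i) • w i) :
    (12 : ℤ) = 3 * (n : ℤ) + ∑ i : ZMod n, τ i := by
  have hpart := Noether.partition w hdet hcov hdisj
  have hkey := Noether.key n w hdet hpart
  have hτ' : ∀ i : ZMod n, det2 (w (i-1)) (w (i+1)) = - τ i := by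
    intro i
    have h := congrArg (fun x => det2 (w (i-1)) x) (hτ i)
    rw [Noether.det2_add_right, Noether.det2_self, zero_add, Noether.det2_smul_right] at h
    have hb : det2 (w (i-1)) (w i) = 1 := by
      have h2 := hdet (i-1); rwa [sub_add_cancel] at h2
    rw [hb, mul_one] at h
    exact h
  have hre : ∑ i : ZMod n, det2 (w (i-1)) (w (i+1)) = ∑ i : ZMod n, det2 (w i) (w (i+2)) := by
    refine Fintype.sum_equiv (Equiv.addRight (-1 : ZMod n))
      (fun i => det2 (w (i-1)) (w (i+1))) (fun i => det2 (w i) (w (i+2))) ?_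
    intro x
    simp only [Equiv.coe_addRight]
    rw [show x + -1 = x - 1 from by ring, show x - 1 + 2 = x + 1 from by ring]
  have hconst : ∑ i : ZMod n, det2 (w (i-1)) (w (i+1)) = ∑ i : ZMod n, (- τ i) :=
    Finset.sum_congr rfl (fun i _ => hτ' i)
  rw [Finset.sum_neg_distrib] at hconst
  linarith [hkey, hre, hconst]
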